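/- Let ν be a probability measure on [0,∞) with finite α-moment m = ∫_{[0,∞)} x^α ν(dx) < ∞. Then for every x > 0, lim_{n→∞} F_n( n^{1/α} x ) = ( 1 + m x^{−α} ) e^{−m x^{−α}}. In particular, the Kendall random walk normalized by n^{1/α} converges in distribution to the law with this cumulative distribution function. -/

import Mathlib

open MeasureTheory Filter Real Topology

private lemma kendall_max_min_aux (u : ℝ) : 1 - max (1 - u) 0 = min u 1 := by
  rcases le_total u 1 with h | h
  · rw [max_eq_left (by linarith), min_eq_left h]; ring
  · rw [max_eq_right (by linarith), min_eq_right h]; ring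

private lemma kendall_b_tendsto (b : ℕ → ℝ) (c : ℝ)
    (hA : Tendsto (fun n : ℕ => (n : ℝ) * (1 - b n)) atTop (𝓝 c)) :
    Tendsto b atTop (𝓝 1) := by
  have hinv : Tendsto (fun n : ℕ => ((n : ℝ))⁻¹) atTop (𝓝 0) :=
    tendsto_inv_atTop_zero.comp tendsto_natCast_atTop_atTop
  have h0 : Tendsto (fun n : ℕ => 1 - ((n : ℝ) * (1 - b n)) * (n : ℝ)⁻¹) atTop (𝓝 1) := by
    simpa using tendsto_const_nhds.sub (hA.mul hinv)
  apply h0.congr'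
  filter_upwards [eventually_ge_atTop 1] with n hn
  have hn0 : (n : ℝ) ≠ 0 := Nat.cast_ne_zero.mpr (by omega)
  field_simp
  ring

private lemma kendall_pow_lemma (b : ℕ → ℝ) (c : ℝ)
    (hA : Tendsto (fun n : ℕ => (n : ℝ) * (1 - b n)) atTop (𝓝 c)) :
    Tendsto (fun n : ℕ => (b n) ^ (n - 1)) atTop (𝓝 (Real.exp (-c))) := by
  have hinv : Tendsto (fun n : ℕ => ((n : ℝ))⁻¹) atTop (𝓝 0) :=
    tendsto_inv_atTop_zero.comp tendsto_natCast_atTop_atTop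
  have hb1 : Tendsto b atTop (𝓝 1) := kendall_b_tendsto b c hA
  have hbpos : ∀ᶠ n in atTop, (0 : ℝ) < b n := hb1.eventually (eventually_gt_nhds one_pos)
  have hdrat : Tendsto (fun n : ℕ => ((n - 1 : ℕ) : ℝ) * (n : ℝ)⁻¹) atTop (𝓝 1) := by
    have h1 : Tendsto (fun n : ℕ => 1 - (n : ℝ)⁻¹) atTop (𝓝 1) := by
      simpa using tendsto_const_nhds.sub hinv
    apply h1.congr'
    filter_upwards [eventually_ge_atTop 1] with n hn
    have hn0 : (n : ℝ) ≠ 0 := Nat.cast_ne_zero.mpr (by omega)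
    rw [Nat.cast_sub hn, Nat.cast_one]
    field_simp
  have hdu : Tendsto (fun n : ℕ => ((n - 1 : ℕ) : ℝ) * (b n - 1)) atTop (𝓝 (-c)) := by
    have hq : Tendsto (fun n : ℕ => -(((n - 1 : ℕ) : ℝ) * (n : ℝ)⁻¹) * ((n : ℝ) * (1 - b n)))
        atTop (𝓝 (-c)) := by
      simpa using hdrat.neg.mul hA
    apply hq.congr'
    filter_upwards [eventually_ge_atTop 1] with n hn
    have hn0 : (n : ℝ) ≠ 0 := Nat.cast_ne_zero.mpr (by omega)
    field_simp
    ring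
  have hdl : Tendsto (fun n : ℕ => ((n - 1 : ℕ) : ℝ) * (b n - 1) * (b n)⁻¹) atTop (𝓝 (-c)) := by
    simpa using hdu.mul (hb1.inv₀ one_ne_zero)
  have hL : Tendsto (fun n : ℕ => ((n - 1 : ℕ) : ℝ) * Real.log (b n)) atTop (𝓝 (-c)) := by
    apply tendsto_of_tendsto_of_tendsto_of_le_of_le' hdl hdu
    · filter_upwards [hbpos] with n hb
      have h1 : 1 - (b n)⁻¹ ≤ Real.log (b n) := by
        have h2 := Real.log_le_sub_one_of_pos (inv_pos.mpr hb)
        rw [Real.log_inv] at h2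
        linarith
      have h3 : ((n - 1 : ℕ) : ℝ) * (1 - (b n)⁻¹) ≤ ((n - 1 : ℕ) : ℝ) * Real.log (b n) :=
        mul_le_mul_of_nonneg_left h1 (Nat.cast_nonneg _)
      have h4 : ((n - 1 : ℕ) : ℝ) * (b n - 1) * (b n)⁻¹ = ((n - 1 : ℕ) : ℝ) * (1 - (b n)⁻¹) := by
        field_simp
      rw [h4]
      exact h3
    · filter_upwards [hbpos] with n hb
      exact mul_le_mul_of_nonneg_left (Real.log_le_sub_one_of_pos hb) (Nat.cast_nonneg _)
  have h0 := (Real.continuous_exp.tendsto _).comp hL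
  apply h0.congr'
  filter_upwards [hbpos] with n hb
  show Real.exp (((n - 1 : ℕ) : ℝ) * Real.log (b n)) = (b n) ^ (n - 1)
  rw [Real.exp_nat_mul, Real.exp_log hb]

private lemma kendall_H_tendsto (α : ℝ) (ν : Measure ℝ) [IsProbabilityMeasure ν]
    (haeg : ∀ᵐ y ∂ν, 0 ≤ y) (hmo : Integrable (fun x => x ^ α) ν)
    (t : ℕ → ℝ) (httop : Tendsto t atTop atTop) :
    Tendsto (fun n : ℕ => ∫ y in Set.Icc 0 (t n), y ^ α ∂ν) atTop (𝓝 (∫ y, y ^ α ∂ν)) := by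
  have key : Tendsto
      (fun n : ℕ => ∫ y, (Set.Icc (0 : ℝ) (t n)).indicator (fun y => y ^ α) y ∂ν)
      atTop (𝓝 (∫ y, y ^ α ∂ν)) := by
    apply tendsto_integral_of_dominated_convergence (fun y => |y ^ α|)
      (fun n => hmo.aestronglyMeasurable.indicator measurableSet_Icc) hmo.abs
    · intro n
      filter_upwards with y
      exact norm_indicator_le_norm_self _ _
    · filter_upwards [haeg] with y hy
      apply Tendsto.congr' _ tendsto_const_nhds
      filter_upwards [httop.eventually_ge_atTop y] with n hn
      rw [Set.indicator_of_mem (Set.mem_Icc.mpr ⟨hy, hn⟩)]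
  apply key.congr
  intro n
  rw [integral_indicator measurableSet_Icc]

private lemma kendall_min_meas (α : ℝ) (hα : 0 < α) (s : ℝ) :
    Measurable (fun y : ℝ => min ((y / s) ^ α) 1) :=
  ((Real.continuous_rpow_const hα.le).measurable.comp
    (measurable_id.div_const s)).min measurable_const

private lemma kendall_min_int (α : ℝ) (hα : 0 < α) (ν : Measure ℝ) [IsProbabilityMeasure ν]
    (haeg : ∀ᵐ y ∂ν, 0 ≤ y) (s : ℝ) (hs : 0 < s) :
    Integrable (fun y => min ((y / s) ^ α) 1) ν := by
  apply Integrable.mono' (integrable_const (1 : ℝ)) (kendall_min_meas α hα s).aestronglyMeasurable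
  filter_upwards [haeg] with y hy
  have h0 : 0 ≤ (y / s) ^ α := Real.rpow_nonneg (div_nonneg hy hs.le) α
  rw [Real.norm_eq_abs, abs_of_nonneg (le_min h0 zero_le_one)]
  exact min_le_right _ _

private lemma kendall_A_tendsto (α : ℝ) (hα : 0 < α) (ν : Measure ℝ) [IsProbabilityMeasure ν]
    (haeg : ∀ᵐ y ∂ν, 0 ≤ y) (hmo : Integrable (fun x => x ^ α) ν)
    (x : ℝ) (hx : 0 < x) (t : ℕ → ℝ)
    (htα : ∀ n : ℕ, 1 ≤ n → (t n) ^ α = (n : ℝ) * x ^ α)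
    (htpos : ∀ n : ℕ, 1 ≤ n → 0 < t n) :
    Tendsto (fun n : ℕ => ∫ y, (n : ℝ) * min ((y / t n) ^ α) 1 ∂ν) atTop
      (𝓝 ((∫ y, y ^ α ∂ν) * x ^ (-α))) := by
  have hxneg : (0 : ℝ) ≤ x ^ (-α) := (Real.rpow_pos_of_pos hx _).le
  have hgint : Integrable (fun y => y ^ α * x ^ (-α)) ν := hmo.mul_const _
  have hpt : ∀ n : ℕ, 1 ≤ n → ∀ y : ℝ, 0 ≤ y →
      (n : ℝ) * min ((y / t n) ^ α) 1 = min (y ^ α * x ^ (-α)) (n : ℝ) := by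
    intro n hn y hy
    have hn0 : (0 : ℝ) < (n : ℝ) := by exact_mod_cast hn
    have hxα : (0 : ℝ) < x ^ α := Real.rpow_pos_of_pos hx _
    have hdr : (y / t n) ^ α = y ^ α / ((n : ℝ) * x ^ α) := by
      rw [Real.div_rpow hy (htpos n hn).le, htα n hn]
    rw [hdr, mul_min_of_nonneg _ _ hn0.le, mul_one]
    congr 1
    rw [Real.rpow_neg hx.le]
    field_simp
  have hval : ∫ y, y ^ α * x ^ (-α) ∂ν = (∫ y, y ^ α ∂ν) * x ^ (-α) := integral_mul_const _ _
  rw [← hval]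
  apply tendsto_integral_of_dominated_convergence (fun y => y ^ α * x ^ (-α))
    (fun n => ((kendall_min_meas α hα (t n)).const_mul _).aestronglyMeasurable) hgint
  · intro n
    filter_upwards [haeg] with y hy
    have hg0 : 0 ≤ y ^ α * x ^ (-α) := mul_nonneg (Real.rpow_nonneg hy _) hxneg
    rcases Nat.eq_zero_or_pos n with h0 | h1
    · simp [h0, hg0]
    · rw [hpt n h1 y hy, Real.norm_eq_abs,
        abs_of_nonneg (le_min hg0 (Nat.cast_nonneg n))]
      exact min_le_left _ _
  · filter_upwards [haeg] with y hy
    have h2 : ∀ᶠ n : ℕ in atTop, (y ^ α * x ^ (-α)) ≤ (n : ℝ) :=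
      tendsto_natCast_atTop_atTop.eventually_ge_atTop _
    apply Tendsto.congr' _ tendsto_const_nhds
    filter_upwards [eventually_ge_atTop 1, h2] with n hn hyn
    rw [hpt n hn y hy, min_eq_left hyn]

/-- if the α-moment m = ∫ x^α ν(dx) is finite, then for every x > 0,
F_n( n^{1/α} x ) → ( 1 + m x^{−α} ) e^{−m x^{−α}} as n → ∞; i.e. the Kendall random walk
normalized by n^{1/α} converges in distribution to the law with this cdf. -/
theorem kendall_clt_finite_moment
    (α : ℝ) (hα : 0 < α)
    (ν : Measure ℝ) [IsProbabilityMeasure ν] (hν : ν (Set.Iio 0) = 0)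
    (G H : ℝ → ℝ)
    (hG : ∀ t, 0 < t → G t = ∫ x, max (1 - (x / t) ^ α) 0 ∂ν)
    (hH : ∀ t, 0 < t → H t = ∫ x in Set.Icc 0 t, x ^ α ∂ν)
    (hmo : Integrable (fun x => x ^ α) ν)
    (Fn : ℕ → ℝ → ℝ)
    (hFn : ∀ (n : ℕ) (t : ℝ), 0 < t →
      Fn n t = (G t) ^ (n - 1) * ((n : ℝ) * t ^ (-α) * H t + G t)) :
    ∀ x, 0 < x →
      Tendsto (fun n : ℕ => Fn n ((n : ℝ) ^ (α⁻¹) * x)) atTop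
        (𝓝 ((1 + (∫ y, y ^ α ∂ν) * x ^ (-α)) * Real.exp (-(∫ y, y ^ α ∂ν) * x ^ (-α)))) := by
  intro x hx
  set m := ∫ y, y ^ α ∂ν with hm
  set t : ℕ → ℝ := fun n => (n : ℝ) ^ (α⁻¹) * x with ht
  have htpos : ∀ n : ℕ, 1 ≤ n → 0 < t n := by
    intro n hn
    exact mul_pos (rpow_pos_of_pos (by exact_mod_cast hn) _) hx
  have httop : Tendsto t atTop atTop := by
    apply Tendsto.atTop_mul_const hx
    exact (tendsto_rpow_atTop (by positivity)).comp tendsto_natCast_atTop_atTop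
  have haeg : ∀ᵐ y ∂ν, 0 ≤ y := by
    rw [ae_iff]
    convert hν using 2
    ext y
    simp [Set.mem_Iio, not_le]
  have htα : ∀ n : ℕ, 1 ≤ n → (t n) ^ α = (n : ℝ) * x ^ α := by
    intro n hn
    have hn0 : (0 : ℝ) ≤ (n : ℝ) := Nat.cast_nonneg n
    rw [ht]
    simp only
    rw [Real.mul_rpow (Real.rpow_nonneg hn0 _) hx.le, ← Real.rpow_mul hn0,
      inv_mul_cancel₀ hα.ne', Real.rpow_one]
  have htneg : ∀ n : ℕ, 1 ≤ n → (t n) ^ (-α) = ((n : ℝ) * x ^ α)⁻¹ := by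
    intro n hn
    rw [Real.rpow_neg (htpos n hn).le, htα n hn]
  -- 1 - G s as an integral
  have hGmin : ∀ s : ℝ, 0 < s → 1 - G s = ∫ y, min ((y / s) ^ α) 1 ∂ν := by
    intro s hs
    have hGint : Integrable (fun y => max (1 - (y / s) ^ α) 0) ν := by
      have heq : (fun y : ℝ => max (1 - (y / s) ^ α) 0)
          = fun y => 1 - min ((y / s) ^ α) 1 := by
        funext y
        have := kendall_max_min_aux ((y / s) ^ α)
        linarith
      rw [heq]
      exact (integrable_const 1).sub (kendall_min_int α hα ν haeg s hs)
    have h3 : ∫ y, ((1 : ℝ) - max (1 - (y / s) ^ α) 0) ∂ν = ∫ y, min ((y / s) ^ α) 1 ∂ν := by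
      congr 1
      funext y
      exact kendall_max_min_aux _
    rw [hG s hs, ← h3, integral_sub (integrable_const 1) hGint]
    simp
  -- the rescaled tail tends to c := m * x ^ (-α)
  have hAc : Tendsto (fun n : ℕ => (n : ℝ) * (1 - G (t n))) atTop (𝓝 (m * x ^ (-α))) := by
    have key := kendall_A_tendsto α hα ν haeg hmo x hx t htα htpos
    rw [← hm] at key
    apply key.congr'
    filter_upwards [eventually_ge_atTop 1] with n hn
    rw [integral_const_mul, ← hGmin (t n) (htpos n hn)]
  have hpow : Tendsto (fun n : ℕ => (G (t n)) ^ (n - 1)) atTop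
      (𝓝 (Real.exp (-(m * x ^ (-α))))) :=
    kendall_pow_lemma (fun n => G (t n)) (m * x ^ (-α)) hAc
  have hb1 : Tendsto (fun n : ℕ => G (t n)) atTop (𝓝 1) :=
    kendall_b_tendsto (fun n => G (t n)) (m * x ^ (-α)) hAc
  have hHm : Tendsto (fun n : ℕ => H (t n)) atTop (𝓝 m) := by
    have key := kendall_H_tendsto α ν haeg hmo t httop
    rw [← hm] at key
    apply key.congr'
    filter_upwards [eventually_ge_atTop 1] with n hn
    rw [← hH (t n) (htpos n hn)]
  have hfinal : Tendsto (fun n : ℕ => (G (t n)) ^ (n - 1) * (x ^ (-α) * H (t n) + G (t n)))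
      atTop (𝓝 (Real.exp (-(m * x ^ (-α))) * (x ^ (-α) * m + 1))) :=
    hpow.mul ((tendsto_const_nhds.mul hHm).add hb1)
  have hvalue : Real.exp (-(m * x ^ (-α))) * (x ^ (-α) * m + 1)
      = (1 + m * x ^ (-α)) * Real.exp (-m * x ^ (-α)) := by
    rw [neg_mul]
    ring
  rw [← hvalue]
  apply hfinal.congr'
  filter_upwards [eventually_ge_atTop 1] with n hn
  have hn0 : (n : ℝ) ≠ 0 := Nat.cast_ne_zero.mpr (by omega)
  have hxα : x ^ α ≠ 0 := (Real.rpow_pos_of_pos hx _).ne'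
  rw [hFn n (t n) (htpos n hn), htneg n hn]
  have hns : (n : ℝ) * ((n : ℝ) * x ^ α)⁻¹ = x ^ (-α) := by
    rw [Real.rpow_neg hx.le]
    field_simp
  rw [hns]
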